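/- Let i ∈ Z/7Z, let L = [i,i+4]_R be a long single red diagonal of the heptagon Π, and let T be a cluster configuration containing L. If i ≠ 1, then exactly one of the two diagonals [i,i+5]_R and [i+6,i+4]_R (the red single diagonals triangulating the quadrilateral Π_4 cut off by L) belongs to T; if i = 1, then exactly one of [1,6]_R and [5,7]_B = ρ([7,5]_R) belongs to T. In each case the two listed diagonals are complements of each other. The analogous statement holds for blue long single diagonals ρ(L) = [i+4,i]_B. -/

import Mathlib

/-!
The combinatorial model of the cluster category `C_{E₆}` by coloured oriented
single and paired diagonals of a regular heptagon, following L. Lamberti,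
"Combinatorial model for the cluster categories of type E", Section 5.

The vertices of the heptagon `Π` are labelled by `ZMod 7` (clockwise; the
label `7` is the same as `0`).  `Π_{1,2,2}` consists of the 42 diagonals
`[i,i+2]_P, [i,i+3]_P, [i,i+4]_R, [i,i+5]_R, [i+4,i]_B, [i+5,i]_B`.
-/

inductive Colour : Type
  | R : Colour
  | B : Colour
  | P : Colour
deriving DecidableEq

/-- A coloured oriented (single or paired) diagonal `[i,j]_c` of the regular
heptagon. -/
structure Dg where
  i : ZMod 7
  j : ZMod 7
  c : Colour
deriving DecidableEq

/-- Abbreviation for entering diagonals by natural-number labels. -/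
def dg (a b : ℕ) (c : Colour) : Dg := ⟨(a : ZMod 7), (b : ZMod 7), c⟩

/-- `ρ`: simultaneous change of colour and orientation. -/
def rho : Dg → Dg
  | ⟨i, j, Colour.R⟩ => ⟨j, i, Colour.B⟩
  | ⟨i, j, Colour.B⟩ => ⟨j, i, Colour.R⟩
  | ⟨i, j, Colour.P⟩ => ⟨i, j, Colour.P⟩

/-- The rotation `[i,j]_c ↦ [i-1,j-1]_c`. -/
def shiftD (d : Dg) : Dg := ⟨d.i - 1, d.j - 1, d.c⟩

/-- The 42 coloured oriented single and paired diagonals `Π_{1,2,2}` of the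
heptagon. -/
def InPi (d : Dg) : Prop :=
  ∃ i : ZMod 7, d = ⟨i, i + 2, Colour.P⟩ ∨ d = ⟨i, i + 3, Colour.P⟩ ∨
    d = ⟨i, i + 4, Colour.R⟩ ∨ d = ⟨i, i + 5, Colour.R⟩ ∨
    d = ⟨i + 4, i, Colour.B⟩ ∨ d = ⟨i + 5, i, Colour.B⟩

/-- The first slice `Π_{1,2,2}|_1` of the quiver `Γ := Γ^7_{1,2,2}`. -/
def firstSlice : List Dg :=
  [dg 1 3 Colour.P, dg 1 4 Colour.P, dg 1 5 Colour.R, dg 1 6 Colour.R,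
   dg 5 1 Colour.B, dg 6 1 Colour.B]

/-- The translation `τ` of `Γ^7_{1,2,2}`: the rotation `[i,j]_c ↦ [i-1,j-1]_c`
composed with the colour-orientation swap `ρ` on the first slice. -/
def tau7 (d : Dg) : Dg :=
  if d ∈ firstSlice then rho (shiftD d) else shiftD d

/-- The translation applied to a whole collection of diagonals. -/
def tauT (T : Finset Dg) : Finset Dg := T.image tau7

/-- The curves of `(1, 3, 'P')`. -/
def c13 : List (List Dg) :=
  [  [dg 2 4 Colour.P,
   dg 2 5 Colour.P,
   dg 2 6 Colour.R,
   dg 6 2 Colour.B,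
   dg 2 7 Colour.R,
   dg 7 2 Colour.B,
   dg 3 7 Colour.R,
   dg 7 3 Colour.B,
   dg 4 7 Colour.P,
   dg 5 7 Colour.P,
   dg 5 1 Colour.P],
  [dg 7 2 Colour.P,
   dg 6 2 Colour.P,
   dg 5 2 Colour.R,
   dg 2 5 Colour.B,
   dg 4 2 Colour.R,
   dg 2 4 Colour.B,
   dg 4 1 Colour.R,
   dg 1 4 Colour.B,
   dg 4 7 Colour.P,
   dg 4 6 Colour.P,
   dg 3 6 Colour.P]]

/-- The curves of `(1, 4, 'P')`. -/
def c14 : List (List Dg) :=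
  [  [dg 2 5 Colour.P,
   dg 2 6 Colour.R,
   dg 6 2 Colour.B,
   dg 2 7 Colour.R,
   dg 7 2 Colour.B,
   dg 3 7 Colour.R,
   dg 7 3 Colour.B,
   dg 4 7 Colour.P,
   dg 5 7 Colour.P,
   dg 5 1 Colour.P],
  [dg 3 5 Colour.P,
   dg 3 6 Colour.P,
   dg 3 7 Colour.R,
   dg 7 3 Colour.B,
   dg 3 1 Colour.R,
   dg 1 3 Colour.B,
   dg 4 1 Colour.R,
   dg 1 4 Colour.B,
   dg 5 1 Colour.P,
   dg 6 1 Colour.P,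
   dg 6 2 Colour.P],
  [dg 7 3 Colour.P,
   dg 7 2 Colour.P,
   dg 6 2 Colour.P,
   dg 5 2 Colour.R,
   dg 2 5 Colour.B,
   dg 4 2 Colour.R,
   dg 2 4 Colour.B,
   dg 4 1 Colour.R,
   dg 1 4 Colour.B,
   dg 4 7 Colour.P],
  [dg 3 6 Colour.P,
   dg 4 6 Colour.P,
   dg 4 7 Colour.P,
   dg 5 7 Colour.P,
   dg 5 1 Colour.P,
   dg 5 2 Colour.R,
   dg 5 3 Colour.R,
   dg 2 5 Colour.B,
   dg 3 5 Colour.B,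
   dg 6 3 Colour.R,
   dg 3 6 Colour.B]]

/-- The curves of `(1, 5, 'R')`. -/
def c15 : List (List Dg) :=
  [  [dg 2 6 Colour.R,
   dg 3 6 Colour.P,
   dg 4 6 Colour.P,
   dg 4 7 Colour.P,
   dg 4 1 Colour.R,
   dg 4 2 Colour.R,
   dg 5 2 Colour.R],
  [dg 2 7 Colour.R,
   dg 3 7 Colour.R,
   dg 4 7 Colour.P,
   dg 5 7 Colour.P,
   dg 5 1 Colour.P,
   dg 5 2 Colour.R,
   dg 5 3 Colour.R,
   dg 6 3 Colour.R],
  [dg 4 7 Colour.B,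
   dg 7 3 Colour.P,
   dg 7 2 Colour.P,
   dg 6 2 Colour.P,
   dg 2 5 Colour.B,
   dg 2 4 Colour.B,
   dg 1 4 Colour.B],
  [dg 7 3 Colour.B,
   dg 1 3 Colour.B,
   dg 1 4 Colour.B,
   dg 5 1 Colour.P,
   dg 6 1 Colour.P,
   dg 6 2 Colour.P,
   dg 3 6 Colour.B,
   dg 4 6 Colour.B]]

/-- The curves of `(1, 6, 'R')`. -/
def c16 : List (List Dg) :=
  [  [dg 2 7 Colour.R,
   dg 3 7 Colour.R,
   dg 4 7 Colour.P,
   dg 5 7 Colour.P,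
   dg 5 1 Colour.P,
   dg 5 2 Colour.R,
   dg 5 3 Colour.R,
   dg 6 3 Colour.R],
  [dg 5 7 Colour.B,
   dg 4 7 Colour.B,
   dg 7 3 Colour.P,
   dg 7 2 Colour.P,
   dg 6 2 Colour.P,
   dg 2 5 Colour.B,
   dg 2 4 Colour.B,
   dg 1 4 Colour.B]]

/-- The curves of `(5, 1, 'B')`. -/
def c51 : List (List Dg) :=
  [  [dg 6 2 Colour.B,
   dg 3 6 Colour.P,
   dg 4 6 Colour.P,
   dg 4 7 Colour.P,
   dg 1 4 Colour.B,
   dg 2 4 Colour.B,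
   dg 2 5 Colour.B],
  [dg 7 2 Colour.B,
   dg 7 3 Colour.B,
   dg 4 7 Colour.P,
   dg 5 7 Colour.P,
   dg 5 1 Colour.P,
   dg 2 5 Colour.B,
   dg 3 5 Colour.B,
   dg 3 6 Colour.B],
  [dg 7 4 Colour.R,
   dg 7 3 Colour.P,
   dg 7 2 Colour.P,
   dg 6 2 Colour.P,
   dg 5 2 Colour.R,
   dg 4 2 Colour.R,
   dg 4 1 Colour.R],
  [dg 3 7 Colour.R,
   dg 3 1 Colour.R,
   dg 4 1 Colour.R,
   dg 5 1 Colour.P,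
   dg 6 1 Colour.P,
   dg 6 2 Colour.P,
   dg 6 3 Colour.R,
   dg 6 4 Colour.R]]

/-- The curves of `(6, 1, 'B')`. -/
def c61 : List (List Dg) :=
  [  [dg 7 2 Colour.B,
   dg 7 3 Colour.B,
   dg 4 7 Colour.P,
   dg 5 7 Colour.P,
   dg 5 1 Colour.P,
   dg 2 5 Colour.B,
   dg 3 5 Colour.B,
   dg 3 6 Colour.B],
  [dg 7 5 Colour.R,
   dg 7 4 Colour.R,
   dg 7 3 Colour.P,
   dg 7 2 Colour.P,
   dg 6 2 Colour.P,
   dg 5 2 Colour.R,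
   dg 4 2 Colour.R,
   dg 4 1 Colour.R]]

/-- The curves `C₁(D), …, C_r(D)` (`r ∈ {2,4}`) attached to each vertex `D`
of the first slice of `Γ`; each curve is the set of diagonals obtained from
`τ^{∓1}(D)` by a prescribed sequence of minimal clockwise (respectively
anticlockwise) rotations around alternating vertices of `Π`. -/
def curvesBase (d : Dg) : List (List Dg) :=
  if d = dg 1 3 Colour.P then c13
  else if d = dg 1 4 Colour.P then c14
  else if d = dg 1 5 Colour.R then c15
  else if d = dg 1 6 Colour.R then c16
  else if d = dg 5 1 Colour.B then c51
  else if d = dg 6 1 Colour.B then c61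
  else []

/-- `Y` lies on the `n`-th curve of `X`: curves of arbitrary vertices of `Γ`
are the `τ`-translates of the curves of the first-slice vertices. -/
def CurveMem (X : Dg) (n : ℕ) (Y : Dg) : Prop :=
  ∃ (k : ℕ) (b : Dg) (C : List Dg) (z : Dg),
    b ∈ firstSlice ∧ tau7^[k] b = X ∧ (curvesBase b)[n]? = some C ∧
      z ∈ C ∧ tau7^[k] z = Y

open Classical in
/-- `dim_k Ext¹_Π(X, Y)`: the number of curves of `X` on which `Y` lies. -/
noncomputable def extDim (X Y : Dg) : ℕ :=
  ((Finset.range 4).filter fun n => CurveMem X n Y).card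

/-- A cluster configuration: six pairwise distinct elements of `Π_{1,2,2}`
with vanishing `Ext¹_Π` between any two of them.  (Under the equivalence of
the mesh category of `Γ^7_{1,2,2}` with `C_{E₆}`, these correspond exactly to
the cluster tilting sets of the cluster category `C_{E₆}`.) -/
def IsConfig (T : Finset Dg) : Prop :=
  T.card = 6 ∧ (∀ d ∈ T, InPi d) ∧ ∀ x ∈ T, ∀ y ∈ T, extDim x y = 0

/-- `x` lies strictly inside the clockwise arc from `a` to `b`. -/
def inArc (a b x : ZMod 7) : Prop :=
  0 < (x - a).val ∧ (x - a).val < (b - a).val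

/-- Two coloured oriented diagonals cross if their underlying chords of `Π`
intersect in an interior point of `Π`. -/
def crosses (a b : Dg) : Prop :=
  (inArc a.i a.j b.i ∧ inArc a.j a.i b.j) ∨
  (inArc a.i a.j b.j ∧ inArc a.j a.i b.i)

/-- Long paired diagonals `[i,i+3]_P`. -/
def IsLongPaired (d : Dg) : Prop := d.c = Colour.P ∧ d.j - d.i = 3

/-- Short paired diagonals `[i,i+2]_P`. -/
def IsShortPaired (d : Dg) : Prop := d.c = Colour.P ∧ d.j - d.i = 2

/-- `D*` is a complement of `D` in the cluster configuration `T`: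
`D* ≠ D` and replacing `D` by `D*` in `T` again yields a cluster
configuration. -/
def IsComplement (T : Finset Dg) (D D' : Dg) : Prop :=
  D' ≠ D ∧ IsConfig (insert D' (T.erase D))

/-! ### Auxiliary development -/

set_option maxRecDepth 10000

instance : Fintype Colour :=
  ⟨⟨{Colour.R, Colour.B, Colour.P}, by decide⟩, fun x => by cases x <;> decide⟩

instance : Fintype Dg :=
  Fintype.ofEquiv (ZMod 7 × ZMod 7 × Colour)
    ⟨fun p => ⟨p.1, p.2.1, p.2.2⟩, fun d => (d.i, d.j, d.c),
     fun p => rfl, fun d => rfl⟩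

instance : DecidablePred InPi := fun d => by unfold InPi; infer_instance

lemma tau14 : ∀ d : Dg, tau7^[14] d = d := by decide

lemma iterate_mod (k : ℕ) (d : Dg) : tau7^[k] d = tau7^[k % 14] d := by
  conv_lhs => rw [← Nat.div_add_mod k 14]
  rw [Function.iterate_add_apply]
  generalize tau7^[k % 14] d = x
  induction k / 14 with
  | zero => rfl
  | succ q ih => rw [Nat.mul_succ, Function.iterate_add_apply, tau14, ih]

/-- Bounded Boolean version of `CurveMem`. -/
def cmemB (X : Dg) (n : ℕ) (Y : Dg) : Bool :=
  (List.range 14).any fun k => firstSlice.any fun b =>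
    (tau7^[k] b == X) &&
      (((curvesBase b)[n]?.getD []).any fun z => tau7^[k] z == Y)

lemma cmem_iff {X Y : Dg} {n : ℕ} : CurveMem X n Y ↔ cmemB X n Y = true := by
  constructor
  · rintro ⟨k, b, C, z, hb, hX, hC, hz, hY⟩
    unfold cmemB
    rw [List.any_eq_true]
    refine ⟨k % 14, List.mem_range.mpr (Nat.mod_lt _ (by norm_num)), ?_⟩
    rw [List.any_eq_true]
    refine ⟨b, hb, ?_⟩
    rw [Bool.and_eq_true, beq_iff_eq, ← iterate_mod, hC]
    refine ⟨hX, ?_⟩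
    rw [Option.getD_some, List.any_eq_true]
    exact ⟨z, hz, by rw [beq_iff_eq, ← iterate_mod]; exact hY⟩
  · intro h
    unfold cmemB at h
    rw [List.any_eq_true] at h
    obtain ⟨k, -, h⟩ := h
    rw [List.any_eq_true] at h
    obtain ⟨b, hb, h⟩ := h
    rw [Bool.and_eq_true, beq_iff_eq] at h
    obtain ⟨hX, h⟩ := h
    cases hC : (curvesBase b)[n]? with
    | none => rw [hC] at h; simp at h
    | some C =>
      rw [hC, Option.getD_some, List.any_eq_true] at h
      obtain ⟨z, hz, hY⟩ := h
      exact ⟨k, b, C, z, hb, hX, hC, hz, beq_iff_eq.mp hY⟩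

open Classical in
lemma extDim_zero_iff' (X Y : Dg) :
    extDim X Y = 0 ↔ ∀ n ∈ Finset.range 4, ¬ CurveMem X n Y := by
  unfold extDim
  rw [Finset.card_eq_zero, Finset.filter_eq_empty_iff]

/-- Boolean test for `extDim X Y = 0`. -/
def extZ (X Y : Dg) : Bool := (List.range 4).all fun n => !(cmemB X n Y)

lemma extDim_eq_zero_iff (X Y : Dg) : extDim X Y = 0 ↔ extZ X Y = true := by
  rw [extDim_zero_iff']
  unfold extZ
  simp only [List.all_eq_true, List.mem_range, Finset.mem_range, Bool.not_eq_true']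
  constructor
  · intro h n hn
    rw [← Bool.not_eq_true]
    exact fun hc => h n hn (cmem_iff.mpr hc)
  · intro h n hn hc
    have := cmem_iff.mp hc
    rw [h n hn] at this
    exact Bool.false_ne_true this

/-! ### τ-equivariance -/

lemma cm_fwd (j : ℕ) {n : ℕ} : ∀ {X Y : Dg},
    CurveMem X n Y → CurveMem (tau7^[j] X) n (tau7^[j] Y) := by
  induction j with
  | zero => intro X Y h; exact h
  | succ m ih =>
    intro X Y h
    obtain ⟨k, b, C, z, hb, hX, hC, hz, hY⟩ := ih h
    refine ⟨k + 1, b, C, z, hb, ?_, hC, hz, ?_⟩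
    · simp only [Function.iterate_succ_apply', hX]
    · simp only [Function.iterate_succ_apply', hY]

lemma cm_bwd (j k : ℕ) (hjk : k + j = 14) {n : ℕ} {X Y : Dg}
    (h : CurveMem (tau7^[j] X) n (tau7^[j] Y)) : CurveMem X n Y := by
  have h2 := cm_fwd k h
  rwa [← Function.iterate_add_apply, ← Function.iterate_add_apply, hjk,
    tau14, tau14] at h2

lemma ext_iter (j k : ℕ) (hjk : k + j = 14) (X Y : Dg) (h : extDim X Y = 0) :
    extDim (tau7^[j] X) (tau7^[j] Y) = 0 := by
  rw [extDim_zero_iff'] at h ⊢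
  intro n hn hc
  exact h n hn (cm_bwd j k hjk hc)

lemma tau7_inj : Function.Injective tau7 := by
  intro a b h
  have h2 := congrArg (tau7^[13]) h
  rw [← Function.iterate_succ_apply, ← Function.iterate_succ_apply] at h2
  rwa [show Nat.succ 13 = 14 from rfl, tau14, tau14] at h2

lemma mem_image_iter {T : Finset Dg} {x : Dg} (j : ℕ) :
    x ∈ T ↔ tau7^[j] x ∈ T.image (tau7^[j]) := by
  constructor
  · exact fun h => Finset.mem_image_of_mem _ h
  · intro h
    obtain ⟨t, ht, e⟩ := Finset.mem_image.mp h
    rwa [← tau7_inj.iterate j e]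

lemma inPi_tau : ∀ d : Dg, InPi d → InPi (tau7 d) := by
  intro d hd
  obtain ⟨a, h⟩ := hd
  fin_cases a <;> rcases h with h | h | h | h | h | h <;> subst h <;> decide

lemma inPi_iter (j : ℕ) (d : Dg) (h : InPi d) : InPi (tau7^[j] d) := by
  induction j with
  | zero => exact h
  | succ m ih => rw [Function.iterate_succ_apply']; exact inPi_tau _ ih

lemma config_image (j k : ℕ) (hjk : k + j = 14) (T : Finset Dg)
    (h : IsConfig T) : IsConfig (T.image (tau7^[j])) := by
  obtain ⟨hc, hp, he⟩ := h
  refine ⟨?_, ?_, ?_⟩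
  · rw [Finset.card_image_of_injective _ (tau7_inj.iterate j), hc]
  · intro d hd
    obtain ⟨t, ht, rfl⟩ := Finset.mem_image.mp hd
    exact inPi_iter j t (hp t ht)
  · intro x hx y hy
    obtain ⟨a, ha, rfl⟩ := Finset.mem_image.mp hx
    obtain ⟨b, hb, rfl⟩ := Finset.mem_image.mp hy
    exact ext_iter j k hjk a b (he a ha b hb)

lemma image_iterate_14 (T : Finset Dg) : T.image (tau7^[14]) = T := by
  have h : tau7^[14] = id := funext tau14
  rw [h, Finset.image_id]

lemma config_reflect (j k : ℕ) (hjk : k + j = 14) (T : Finset Dg)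
    (h : IsConfig (T.image (tau7^[j]))) : IsConfig T := by
  have h2 := config_image k j (by omega) _ h
  rwa [Finset.image_image, ← Function.iterate_add, hjk, image_iterate_14] at h2
/-! ### Data for the base case `L = [1,5]_R` -/

def piList : List Dg := [dg 0 2 Colour.B, dg 0 2 Colour.P, dg 0 3 Colour.B, dg 0 3 Colour.P, dg 0 4 Colour.R, dg 0 5 Colour.R, dg 1 3 Colour.B, dg 1 3 Colour.P, dg 1 4 Colour.B, dg 1 4 Colour.P, dg 1 5 Colour.R, dg 1 6 Colour.R, dg 2 0 Colour.R, dg 2 4 Colour.B, dg 2 4 Colour.P, dg 2 5 Colour.B, dg 2 5 Colour.P, dg 2 6 Colour.R, dg 3 0 Colour.R, dg 3 1 Colour.R, dg 3 5 Colour.B, dg 3 5 Colour.P, dg 3 6 Colour.B, dg 3 6 Colour.P, dg 4 0 Colour.B, dg 4 0 Colour.P, dg 4 1 Colour.R, dg 4 2 Colour.R, dg 4 6 Colour.B, dg 4 6 Colour.P, dg 5 0 Colour.B, dg 5 0 Colour.P, dg 5 1 Colour.B, dg 5 1 Colour.P, dg 5 2 Colour.R, dg 5 3 Colour.R, dg 6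 1 Colour.B, dg 6 1 Colour.P, dg 6 2 Colour.B, dg 6 2 Colour.P, dg 6 3 Colour.R, dg 6 4 Colour.R]

def spList : List Dg := [dg 0 2 Colour.B, dg 0 4 Colour.R, dg 0 5 Colour.R, dg 1 3 Colour.P, dg 1 4 Colour.P, dg 2 4 Colour.P, dg 2 5 Colour.P, dg 3 1 Colour.R, dg 3 5 Colour.B, dg 3 5 Colour.P, dg 5 1 Colour.B, dg 6 1 Colour.B, dg 6 2 Colour.B, dg 6 4 Colour.R]

def badPairs : List (Dg × Dg) := [(dg 0 2 Colour.B, dg 1 3 Colour.P), (dg 0 2 Colour.B, dg 1 4 Colour.P), (dg 0 2 Colour.B, dg 5 1 Colour.B), (dg 0 2 Colour.B, dg 6 1 Colour.B), (dg 0 4 Colour.R, dg 2 5 Colour.P), (dg 0 4 Colour.R, dg 3 1 Colour.R), (dg 0 4 Colour.R, dg 3 5 Colour.P), (dg 0 4 Colour.R, dg 5 1 Colour.B), (dg 0 4 Colour.R, dg 6 1 Colour.B), (dg 0 4 Colour.R, dg 6 2 Colour.B), (dg 0 5 Colour.R, dg 3 1 Colour.R), (dg 0 5 Colour.R, dg 6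 1 Colour.B), (dg 0 5 Colour.R, dg 6 2 Colour.B), (dg 0 5 Colour.R, dg 6 4 Colour.R), (dg 1 3 Colour.P, dg 2 4 Colour.P), (dg 1 3 Colour.P, dg 2 5 Colour.P), (dg 1 3 Colour.P, dg 6 2 Colour.B), (dg 1 4 Colour.P, dg 2 5 Colour.P), (dg 1 4 Colour.P, dg 3 1 Colour.R), (dg 1 4 Colour.P, dg 3 5 Colour.B), (dg 1 4 Colour.P, dg 3 5 Colour.P), (dg 1 4 Colour.P, dg 6 2 Colour.B), (dg 2 4 Colour.P, dg 3 1 Colour.R), (dg 2 4 Colour.P, dg 3 5 Colour.B), (dg 2 4 Colour.P, dg 3 5 Colour.P), (dg 2 5 Colour.P, dg 3 1 Colour.R), (dg 2 5 Colour.P, dg 3 5 Colour.B), (dg 2 5 Colour.P, dg 6 4 Colour.R), (dg 3 1 Colour.R, dg 5 1 Colour.B), (dg 3 5 Colour.B, dg 5 1 Colour.B), (dg 3 5 Colour.B, dg 6 1 Colour.B), (dg 3 5 Colour.B, dg 6 2 Colour.B), (dg 3 5 Colour.P, dg 6 4 Colour.R), (dg 5 1 Colour.B, dg 6 2 Colour.B),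 (dg 5 1 Colour.B, dg 6 4 Colour.R)]

lemma spNodup : spList.Nodup := by decide

lemma inPi_mem : ∀ t : Dg, InPi t → t ∈ piList := by
  intro t ht
  obtain ⟨a, h⟩ := ht
  fin_cases a <;> rcases h with h | h | h | h | h | h <;> subst h <;> decide

lemma d_notboth : extZ (dg 1 6 Colour.R) (dg 5 7 Colour.B) = false := by decide

lemma d_selfX1 : extZ (dg 1 6 Colour.R) (dg 1 6 Colour.R) = true := by decide

lemma d_selfX2 : extZ (dg 5 7 Colour.B) (dg 5 7 Colour.B) = true := by decide

lemma bp_sound : badPairs.all (fun p => !extZ p.1 p.2) = true := by decide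

lemma cliqueFree : ((spList.sublistsLen 5).all fun l =>
    badPairs.any fun p => (l.any (· == p.1)) && (l.any (· == p.2))) = true := by
  decide

lemma memS : (piList.all fun t =>
    (t == dg 1 5 Colour.R) || (t == dg 1 6 Colour.R) || (t == dg 5 7 Colour.B) ||
    spList.any (· == t) || !extZ (dg 1 5 Colour.R) t) = true := by decide

lemma keyA : (piList.all fun t =>
    (t == dg 1 6 Colour.R) || !extZ (dg 1 5 Colour.R) t ||
    !extZ (dg 1 6 Colour.R) t ||
    (extZ (dg 5 7 Colour.B) t && extZ t (dg 5 7 Colour.B))) = true := by decide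

lemma keyB : (piList.all fun t =>
    (t == dg 5 7 Colour.B) || !extZ (dg 1 5 Colour.R) t ||
    !extZ (dg 5 7 Colour.B) t ||
    (extZ (dg 1 6 Colour.R) t && extZ t (dg 1 6 Colour.R))) = true := by decide

/-- Extract a length-5 sublist from a 5-element subset of `spList.toFinset`. -/
lemma bridge (s : Finset Dg) (hs : s ⊆ spList.toFinset) (hc : s.card = 5) :
    ∃ l ∈ spList.sublistsLen 5, ∀ x, x ∈ l ↔ x ∈ s := by
  refine ⟨spList.filter (· ∈ s), ?_, ?_⟩
  · rw [List.mem_sublistsLen]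
    refine ⟨List.filter_sublist, ?_⟩
    have hnd : (spList.filter (· ∈ s)).Nodup := spNodup.filter _
    have hts : (spList.filter (· ∈ s)).toFinset = s := by
      ext x
      simp only [List.mem_toFinset, List.mem_filter, decide_eq_true_eq]
      exact ⟨fun h => h.2, fun h => ⟨List.mem_toFinset.mp (hs h), h⟩⟩
    have := List.toFinset_card_of_nodup hnd
    rw [hts, hc] at this
    omega
  · intro x
    simp only [List.mem_filter, decide_eq_true_eq]
    exact ⟨fun h => h.2, fun h => ⟨List.mem_toFinset.mp (hs h), h⟩⟩
/-! ### The base case -/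

lemma baseCase (T : Finset Dg) (hT : IsConfig T) (hL : dg 1 5 Colour.R ∈ T) :
    Xor' (dg 1 6 Colour.R ∈ T) (dg 5 7 Colour.B ∈ T) ∧
    (dg 1 6 Colour.R ∈ T → IsComplement T (dg 1 6 Colour.R) (dg 5 7 Colour.B)) ∧
    (dg 5 7 Colour.B ∈ T → IsComplement T (dg 5 7 Colour.B) (dg 1 6 Colour.R)) := by
  obtain ⟨hcard, hPi, hext⟩ := hT
  have notboth : ¬(dg 1 6 Colour.R ∈ T ∧ dg 5 7 Colour.B ∈ T) := by
    rintro ⟨h1, h2⟩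
    have h3 := (extDim_eq_zero_iff _ _).mp (hext _ h1 _ h2)
    rw [d_notboth] at h3
    exact Bool.false_ne_true h3
  have hor : dg 1 6 Colour.R ∈ T ∨ dg 5 7 Colour.B ∈ T := by
    by_contra hno
    push_neg at hno
    obtain ⟨h1, h2⟩ := hno
    have hsub : T.erase (dg 1 5 Colour.R) ⊆ spList.toFinset := by
      intro t ht
      have htT := Finset.mem_of_mem_erase ht
      have htne := Finset.ne_of_mem_erase ht
      have htL : extZ (dg 1 5 Colour.R) t = true :=
        (extDim_eq_zero_iff _ _).mp (hext _ hL _ htT)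
      have h3 := List.all_eq_true.mp memS t (inPi_mem t (hPi t htT))
      simp only [Bool.or_eq_true, Bool.not_eq_true', beq_iff_eq,
        List.any_eq_true] at h3
      rcases h3 with ((((h3 | h3) | h3) | ⟨x, hx, h3⟩) | h3)
      · exact absurd h3 htne
      · exact absurd (h3 ▸ htT) h1
      · exact absurd (h3 ▸ htT) h2
      · rw [List.mem_toFinset, ← h3]; exact hx
      · rw [htL] at h3; exact absurd h3 (by decide)
    have hc5 : (T.erase (dg 1 5 Colour.R)).card = 5 := by
      rw [Finset.card_erase_of_mem hL, hcard]
    obtain ⟨l, hsl, hlt⟩ := bridge _ hsub hc5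
    have h4 := List.all_eq_true.mp cliqueFree l hsl
    simp only [List.any_eq_true, Bool.and_eq_true, beq_iff_eq] at h4
    obtain ⟨p, hp, ⟨a, ha, ha'⟩, ⟨b, hb, hb'⟩⟩ := h4
    have hp1 : p.1 ∈ T := Finset.mem_of_mem_erase (ha' ▸ (hlt a).mp ha)
    have hp2 : p.2 ∈ T := Finset.mem_of_mem_erase (hb' ▸ (hlt b).mp hb)
    have h5 := List.all_eq_true.mp bp_sound p hp
    rw [Bool.not_eq_true'] at h5
    have h6 := (extDim_eq_zero_iff _ _).mp (hext _ hp1 _ hp2)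
    rw [h5] at h6
    exact Bool.false_ne_true h6
  refine ⟨?_, ?_, ?_⟩
  · unfold Xor'
    rcases hor with h | h
    · exact Or.inl ⟨h, fun h2 => notboth ⟨h, h2⟩⟩
    · exact Or.inr ⟨h, fun h2 => notboth ⟨h2, h⟩⟩
  · -- complement of X1 = [1,6]_R
    intro hX1
    have hX2T : dg 5 7 Colour.B ∉ T := fun h => notboth ⟨hX1, h⟩
    have key : ∀ t ∈ T.erase (dg 1 6 Colour.R),
        extZ (dg 5 7 Colour.B) t = true ∧ extZ t (dg 5 7 Colour.B) = true := by
      intro t ht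
      have htT := Finset.mem_of_mem_erase ht
      have h3 := List.all_eq_true.mp keyA t (inPi_mem t (hPi t htT))
      simp only [Bool.or_eq_true, Bool.not_eq_true', beq_iff_eq,
        Bool.and_eq_true] at h3
      rcases h3 with (((h3 | h3) | h3) | h3)
      · exact absurd h3 (Finset.ne_of_mem_erase ht)
      · rw [(extDim_eq_zero_iff _ _).mp (hext _ hL _ htT)] at h3
        exact absurd h3 (by decide)
      · rw [(extDim_eq_zero_iff _ _).mp (hext _ hX1 _ htT)] at h3
        exact absurd h3 (by decide)
      · exact h3
    refine ⟨by decide, ?_, ?_, ?_⟩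
    · have hni : dg 5 7 Colour.B ∉ T.erase (dg 1 6 Colour.R) :=
        fun h => hX2T (Finset.mem_of_mem_erase h)
      rw [Finset.card_insert_of_notMem hni, Finset.card_erase_of_mem hX1, hcard]
    · intro d hd
      rcases Finset.mem_insert.mp hd with rfl | hd'
      · decide
      · exact hPi d (Finset.mem_of_mem_erase hd')
    · intro x hx y hy
      rcases Finset.mem_insert.mp hx with rfl | hx' <;>
        rcases Finset.mem_insert.mp hy with rfl | hy'
      · exact (extDim_eq_zero_iff _ _).mpr d_selfX2
      · exact (extDim_eq_zero_iff _ _).mpr (key y hy').1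
      · exact (extDim_eq_zero_iff _ _).mpr (key x hx').2
      · exact hext x (Finset.mem_of_mem_erase hx') y (Finset.mem_of_mem_erase hy')
  · -- complement of X2 = [5,7]_B
    intro hX2
    have hX1T : dg 1 6 Colour.R ∉ T := fun h => notboth ⟨h, hX2⟩
    have key : ∀ t ∈ T.erase (dg 5 7 Colour.B),
        extZ (dg 1 6 Colour.R) t = true ∧ extZ t (dg 1 6 Colour.R) = true := by
      intro t ht
      have htT := Finset.mem_of_mem_erase ht
      have h3 := List.all_eq_true.mp keyB t (inPi_mem t (hPi t htT))
      simp only [Bool.or_eq_true, Bool.not_eq_true', beq_iff_eq,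
        Bool.and_eq_true] at h3
      rcases h3 with (((h3 | h3) | h3) | h3)
      · exact absurd h3 (Finset.ne_of_mem_erase ht)
      · rw [(extDim_eq_zero_iff _ _).mp (hext _ hL _ htT)] at h3
        exact absurd h3 (by decide)
      · rw [(extDim_eq_zero_iff _ _).mp (hext _ hX2 _ htT)] at h3
        exact absurd h3 (by decide)
      · exact h3
    refine ⟨by decide, ?_, ?_, ?_⟩
    · have hni : dg 1 6 Colour.R ∉ T.erase (dg 5 7 Colour.B) :=
        fun h => hX1T (Finset.mem_of_mem_erase h)
      rw [Finset.card_insert_of_notMem hni, Finset.card_erase_of_mem hX2, hcard]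
    · intro d hd
      rcases Finset.mem_insert.mp hd with rfl | hd'
      · decide
      · exact hPi d (Finset.mem_of_mem_erase hd')
    · intro x hx y hy
      rcases Finset.mem_insert.mp hx with rfl | hx' <;>
        rcases Finset.mem_insert.mp hy with rfl | hy'
      · exact (extDim_eq_zero_iff _ _).mpr d_selfX1
      · exact (extDim_eq_zero_iff _ _).mpr (key y hy').1
      · exact (extDim_eq_zero_iff _ _).mpr (key x hx').2
      · exact hext x (Finset.mem_of_mem_erase hx') y (Finset.mem_of_mem_erase hy')

/-! ### Transport along powers of `τ` -/

lemma transported (j k : ℕ) (hjk : k + j = 14) (L X1 X2 : Dg)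
    (hL0 : tau7^[j] L = dg 1 5 Colour.R) (h1 : tau7^[j] X1 = dg 1 6 Colour.R)
    (h2 : tau7^[j] X2 = dg 5 7 Colour.B)
    (T : Finset Dg) (hT : IsConfig T) (hLT : L ∈ T) :
    Xor' (X1 ∈ T) (X2 ∈ T) ∧ (X1 ∈ T → IsComplement T X1 X2) ∧
      (X2 ∈ T → IsComplement T X2 X1) := by
  have hT' := config_image j k hjk T hT
  have hLT' : dg 1 5 Colour.R ∈ T.image (tau7^[j]) :=
    hL0 ▸ Finset.mem_image_of_mem _ hLT
  obtain ⟨hxor, hc1, hc2⟩ := baseCase _ hT' hLT'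
  have i1 : X1 ∈ T ↔ dg 1 6 Colour.R ∈ T.image (tau7^[j]) :=
    h1 ▸ mem_image_iter j
  have i2 : X2 ∈ T ↔ dg 5 7 Colour.B ∈ T.image (tau7^[j]) :=
    h2 ▸ mem_image_iter j
  refine ⟨?_, ?_, ?_⟩
  · unfold Xor' at hxor ⊢
    rcases hxor with ⟨ha, hb⟩ | ⟨ha, hb⟩
    · exact Or.inl ⟨i1.mpr ha, fun h => hb (i2.mp h)⟩
    · exact Or.inr ⟨i2.mpr ha, fun h => hb (i1.mp h)⟩
  · intro hX1
    obtain ⟨hne, hcfg⟩ := hc1 (i1.mp hX1)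
    refine ⟨fun e => hne (by rw [← h1, ← h2, e]), ?_⟩
    apply config_reflect j k hjk
    rwa [Finset.image_insert, Finset.image_erase (tau7_inj.iterate j), h1, h2]
  · intro hX2
    obtain ⟨hne, hcfg⟩ := hc2 (i2.mp hX2)
    refine ⟨fun e => hne (by rw [← h1, ← h2, e]), ?_⟩
    apply config_reflect j k hjk
    rwa [Finset.image_insert, Finset.image_erase (tau7_inj.iterate j), h2, h1]
/-- Lemma 5.10.  Let `i ∈ ℤ/7`, let `L = [i,i+4]_R` be a
long single red diagonal of the heptagon `Π`, and let `T` be a cluster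
configuration containing `L`.  If `i ≠ 1`, then exactly one of the two
diagonals `[i,i+5]_R` and `[i+6,i+4]_R` (the red single diagonals
triangulating the quadrilateral `Π₄` cut off by `L`) belongs to `T`; if
`i = 1`, then exactly one of `[1,6]_R` and `[5,7]_B = ρ([7,5]_R)` belongs to
`T`.  In each case the two listed diagonals are complements of each other.
The analogous statement holds for blue long single diagonals
`ρ(L) = [i+4,i]_B`. -/
theorem long_single_forces_quadrilateral_diagonal (i : ZMod 7) (T : Finset Dg)
    (hT : IsConfig T) :
    ((⟨i, i + 4, Colour.R⟩ : Dg) ∈ T →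
      (i ≠ 1 →
        Xor' ((⟨i, i + 5, Colour.R⟩ : Dg) ∈ T)
             ((⟨i + 6, i + 4, Colour.R⟩ : Dg) ∈ T) ∧
        ((⟨i, i + 5, Colour.R⟩ : Dg) ∈ T →
          IsComplement T ⟨i, i + 5, Colour.R⟩ ⟨i + 6, i + 4, Colour.R⟩) ∧
        ((⟨i + 6, i + 4, Colour.R⟩ : Dg) ∈ T →
          IsComplement T ⟨i + 6, i + 4, Colour.R⟩ ⟨i, i + 5, Colour.R⟩)) ∧
      (i = 1 →
        Xor' ((dg 1 6 Colour.R) ∈ T) ((dg 5 7 Colour.B) ∈ T) ∧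
        ((dg 1 6 Colour.R) ∈ T →
          IsComplement T (dg 1 6 Colour.R) (dg 5 7 Colour.B)) ∧
        ((dg 5 7 Colour.B) ∈ T →
          IsComplement T (dg 5 7 Colour.B) (dg 1 6 Colour.R)))) ∧
    ((⟨i + 4, i, Colour.B⟩ : Dg) ∈ T →
      (i ≠ 1 →
        Xor' ((⟨i + 5, i, Colour.B⟩ : Dg) ∈ T)
             ((⟨i + 4, i + 6, Colour.B⟩ : Dg) ∈ T) ∧
        ((⟨i + 5, i, Colour.B⟩ : Dg) ∈ T →
          IsComplement T ⟨i + 5, i, Colour.B⟩ ⟨i + 4, i + 6, Colour.B⟩) ∧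
        ((⟨i + 4, i + 6, Colour.B⟩ : Dg) ∈ T →
          IsComplement T ⟨i + 4, i + 6, Colour.B⟩ ⟨i + 5, i, Colour.B⟩)) ∧
      (i = 1 →
        Xor' ((dg 6 1 Colour.B) ∈ T) ((dg 7 5 Colour.R) ∈ T) ∧
        ((dg 6 1 Colour.B) ∈ T →
          IsComplement T (dg 6 1 Colour.B) (dg 7 5 Colour.R)) ∧
        ((dg 7 5 Colour.R) ∈ T →
          IsComplement T (dg 7 5 Colour.R) (dg 6 1 Colour.B)))) := by
  have h7 : ∀ z : ZMod 7, z = 0 ∨ z = 1 ∨ z = 2 ∨ z = 3 ∨ z = 4 ∨ z = 5 ∨ z = 6 := by decide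
  rcases h7 i with rfl | rfl | rfl | rfl | rfl | rfl | rfl
  · refine ⟨fun hL => ⟨fun _ => ?_, fun hbad => absurd hbad (by decide)⟩,
            fun hL => ⟨fun _ => ?_, fun hbad => absurd hbad (by decide)⟩⟩
    · exact transported 6 8 rfl _ _ _ (by decide) (by decide) (by decide) T hT hL
    · exact transported 13 1 rfl _ _ _ (by decide) (by decide) (by decide) T hT hL
  · refine ⟨fun hL => ⟨fun hbad => absurd rfl hbad, fun _ => ?_⟩,
            fun hL => ⟨fun hbad => absurd rfl hbad, fun _ => ?_⟩⟩
    · exact transported 14 0 rfl _ _ _ (by decide) (by decide) (by decide) T hT hL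
    · exact transported 7 7 rfl _ _ _ (by decide) (by decide) (by decide) T hT hL
  · refine ⟨fun hL => ⟨fun _ => ?_, fun hbad => absurd hbad (by decide)⟩,
            fun hL => ⟨fun _ => ?_, fun hbad => absurd hbad (by decide)⟩⟩
    · exact transported 1 13 rfl _ _ _ (by decide) (by decide) (by decide) T hT hL
    · exact transported 8 6 rfl _ _ _ (by decide) (by decide) (by decide) T hT hL
  · refine ⟨fun hL => ⟨fun _ => ?_, fun hbad => absurd hbad (by decide)⟩,
            fun hL => ⟨fun _ => ?_, fun hbad => absurd hbad (by decide)⟩⟩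
    · exact transported 2 12 rfl _ _ _ (by decide) (by decide) (by decide) T hT hL
    · exact transported 9 5 rfl _ _ _ (by decide) (by decide) (by decide) T hT hL
  · refine ⟨fun hL => ⟨fun _ => ?_, fun hbad => absurd hbad (by decide)⟩,
            fun hL => ⟨fun _ => ?_, fun hbad => absurd hbad (by decide)⟩⟩
    · exact transported 3 11 rfl _ _ _ (by decide) (by decide) (by decide) T hT hL
    · exact transported 10 4 rfl _ _ _ (by decide) (by decide) (by decide) T hT hL
  · refine ⟨fun hL => ⟨fun _ => ?_, fun hbad => absurd hbad (by decide)⟩,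
            fun hL => ⟨fun _ => ?_, fun hbad => absurd hbad (by decide)⟩⟩
    · exact transported 4 10 rfl _ _ _ (by decide) (by decide) (by decide) T hT hL
    · exact transported 11 3 rfl _ _ _ (by decide) (by decide) (by decide) T hT hL
  · refine ⟨fun hL => ⟨fun _ => ?_, fun hbad => absurd hbad (by decide)⟩,
            fun hL => ⟨fun _ => ?_, fun hbad => absurd hbad (by decide)⟩⟩
    · exact transported 5 9 rfl _ _ _ (by decide) (by decide) (by decide) T hT hL
    · exact transported 12 2 rfl _ _ _ (by decide) (by decide) (by decide) T hT hL
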